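/- Let k be an integer, n ≥ 2, d = gcd(k, n-1), and p, q integers with (n-1)p + kq = d. If α ∈ B_n satisfies α^{(n-1)/d} = δ^n (e.g., α is conjugate to ε^d), then δ^{np}(α^{k/d})^q = α; and if β ∈ B_n satisfies β^{(n-1)/d} = δ^{kn/d} (e.g., β is conjugate to ε^k), then (δ^{np} β^q)^{k/d} = β. In particular, the maps f(α) = α^{k/d} and g(β) = δ^{np}β^q are mutually inverse bijections between the conjugacy class of ε^d and the conjugacy class of ε^k. -/

import Mathlib

def braidRels (m : ℕ) : Set (FreeGroup (Fin m)) :=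
  {r | ∃ i j : Fin m,
      ((i : ℕ) + 2 ≤ (j : ℕ) ∧
        r = FreeGroup.of i * FreeGroup.of j * (FreeGroup.of i)⁻¹ * (FreeGroup.of j)⁻¹) ∨
      ((i : ℕ) + 1 = (j : ℕ) ∧
        r = FreeGroup.of i * FreeGroup.of j * FreeGroup.of i *
            (FreeGroup.of j * FreeGroup.of i * FreeGroup.of j)⁻¹)}

/-- Artin's braid group `B_n`, with generators `σ₁, …, σ_{n-1}`. -/
abbrev BraidGroup (n : ℕ) := PresentedGroup (braidRels (n - 1))

/-- The Artin generator `σ i` of `B_n` (junk value `1` if `i` is out of range). -/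
def bσ (n i : ℕ) : BraidGroup n :=
  if h : i - 1 < n - 1 then PresentedGroup.of ⟨i - 1, h⟩ else 1

/-- `δ = σ_{n-1} σ_{n-2} ⋯ σ₁`. -/
def bδ (n : ℕ) : BraidGroup n := ((List.range (n-1)).map (fun k => bσ n (n-1-k))).prod

/-- `ε = δ σ₁`. -/
def bε (n : ℕ) : BraidGroup n := bδ n * bσ n 1

/-- `Δ = σ₁ (σ₂σ₁) ⋯ (σ_{n-1} ⋯ σ₁)`. -/
def bΔ (n : ℕ) : BraidGroup n :=
  ((List.range (n-1)).map (fun m => ((List.range (m+1)).map (fun k => bσ n (m+1-k))).prod)).prod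

/-- The band generator `a_{ij} = σ_{i-1} ⋯ σ_{j+1} σ_j σ_{j+1}⁻¹ ⋯ σ_{i-1}⁻¹`. -/
def band (n i j : ℕ) : BraidGroup n :=
  (((List.range (i-1-j)).map (fun k => bσ n (i-1-k))).prod) * bσ n j *
  (((List.range (i-1-j)).map (fun k => bσ n (i-1-k))).prod)⁻¹

/-- `[i, i-1, …, j] = a_{i,i-1} a_{i-1,i-2} ⋯ a_{j+1,j}`. -/
def bchain (n i j : ℕ) : BraidGroup n :=
  ((List.range (i-j)).map (fun t => band n (i-t) (i-t-1))).prod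
namespace StableAux

lemma rel_one {α : Type*} {rels : Set (FreeGroup α)} {r : FreeGroup α} (h : r ∈ rels) :
    PresentedGroup.mk rels r = 1 :=
  (QuotientGroup.eq_one_iff _).2 (Subgroup.subset_normalClosure h)

variable {n : ℕ}

lemma of_comm {a b : Fin (n-1)} (h : (a:ℕ)+2 ≤ (b:ℕ)) :
    (PresentedGroup.of a : BraidGroup n) * PresentedGroup.of b =
      PresentedGroup.of b * PresentedGroup.of a := by
  have h1 : PresentedGroup.mk (braidRels (n-1))
      (FreeGroup.of a * FreeGroup.of b * (FreeGroup.of a)⁻¹ * (FreeGroup.of b)⁻¹) = 1 :=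
    rel_one ⟨a, b, Or.inl ⟨h, rfl⟩⟩
  simp only [map_mul, map_inv] at h1
  rw [mul_inv_eq_one, mul_inv_eq_iff_eq_mul] at h1
  exact h1

lemma of_braid {a b : Fin (n-1)} (h : (a:ℕ)+1 = (b:ℕ)) :
    (PresentedGroup.of a : BraidGroup n) * PresentedGroup.of b * PresentedGroup.of a =
      PresentedGroup.of b * PresentedGroup.of a * PresentedGroup.of b := by
  have h1 : PresentedGroup.mk (braidRels (n-1))
      (FreeGroup.of a * FreeGroup.of b * FreeGroup.of a *
        (FreeGroup.of b * FreeGroup.of a * FreeGroup.of b)⁻¹) = 1 :=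
    rel_one ⟨a, b, Or.inr ⟨h, rfl⟩⟩
  simp only [map_mul, map_inv] at h1
  rw [mul_inv_eq_one] at h1
  exact h1

lemma bσ_of {i : ℕ} (h1 : 1 ≤ i) (h2 : i ≤ n-1) :
    bσ n i = PresentedGroup.of (⟨i-1, by omega⟩ : Fin (n-1)) := by
  rw [bσ, dif_pos]

lemma bσ_comm {i j : ℕ} (hi : 1 ≤ i) (hij : i + 2 ≤ j) (hj : j ≤ n - 1) :
    bσ n i * bσ n j = bσ n j * bσ n i := by
  rw [bσ_of hi (by omega), bσ_of (by omega : 1 ≤ j) hj]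
  exact of_comm (by simp; omega)

lemma bσ_braid {i : ℕ} (hi : 1 ≤ i) (hij : i + 1 ≤ n - 1) :
    bσ n i * bσ n (i+1) * bσ n i = bσ n (i+1) * bσ n i * bσ n (i+1) := by
  rw [bσ_of hi (by omega), bσ_of (by omega : 1 ≤ i+1) hij]
  exact of_braid (by simp; omega)

/-- `U n j = σ_j σ_{j-1} ⋯ σ₁`. -/
def U (n j : ℕ) : BraidGroup n := ((List.range j).map (fun k => bσ n (j-k))).prod

lemma U_zero : U n 0 = 1 := rfl

lemma U_succ (j : ℕ) : U n (j+1) = bσ n (j+1) * U n j := by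
  rw [U, List.range_succ_eq_map]
  simp only [List.map_cons, List.map_map, List.prod_cons, Nat.sub_zero]
  congr 1
  rw [U]
  congr 1
  apply List.map_congr_left
  intro k _
  simp [Nat.succ_sub_succ]

lemma bδ_eq : bδ n = U n (n-1) := rfl

lemma bσ_comm_U {m j : ℕ} (hm : j + 2 ≤ m) (hm2 : m ≤ n-1) :
    bσ n m * U n j = U n j * bσ n m := by
  induction j with
  | zero => rw [U_zero, mul_one, one_mul]
  | succ j ih =>
    rw [U_succ, ← mul_assoc, ← bσ_comm (by omega) (by omega) hm2, mul_assoc,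
      ih (by omega), mul_assoc]

lemma shift_U_base {i : ℕ} (hi : 1 ≤ i) (hij : i + 1 ≤ n-1) :
    bσ n i * U n (i+1) = U n (i+1) * bσ n (i+1) := by
  obtain ⟨i', rfl⟩ : ∃ i', i = i' + 1 := ⟨i - 1, by omega⟩
  rw [U_succ, U_succ, ← mul_assoc, ← mul_assoc, bσ_braid (by omega) hij]
  simp only [mul_assoc]
  rw [bσ_comm_U (by omega : i' + 2 ≤ i'+1+1) (by omega)]

lemma shift_U {i j : ℕ} (hi : 1 ≤ i) (hij : i + 1 ≤ j) (hj : j ≤ n-1) :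
    bσ n i * U n j = U n j * bσ n (i+1) := by
  induction j, hij using Nat.le_induction with
  | base => exact shift_U_base hi hj
  | succ j hij ih =>
    rw [U_succ, ← mul_assoc, bσ_comm hi (by omega) hj, mul_assoc, ih (by omega),
      mul_assoc]

lemma bσ_comm_U' {m j : ℕ} (hm : j + 2 ≤ m) (hm2 : m ≤ n-1) (x : BraidGroup n) :
    U n j * (bσ n m * x) = bσ n m * (U n j * x) := by
  rw [← mul_assoc, ← bσ_comm_U hm hm2, mul_assoc]

lemma braid' {i : ℕ} (hi : 1 ≤ i) (hin : i + 1 ≤ n - 1) (x : BraidGroup n) :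
    bσ n i * (bσ n (i+1) * (bσ n i * x)) = bσ n (i+1) * (bσ n i * (bσ n (i+1) * x)) := by
  simp only [← mul_assoc]
  rw [bσ_braid hi hin]

lemma L1 {j : ℕ} (hj : j + 1 ≤ n - 1) :
    bσ n (j+1) * (U n j * U n (j+1)) = U n j * (U n (j+1) * bσ n 1) := by
  induction j with
  | zero =>
    rw [U_zero, one_mul, one_mul, U_succ, U_zero, mul_one]
  | succ j ih =>
    calc bσ n (j+1+1) * (U n (j+1) * U n (j+1+1))
        = bσ n (j+1+1) * (bσ n (j+1) * (U n j * (bσ n (j+1+1) * (bσ n (j+1) * U n j)))) := by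
          rw [U_succ (j+1), U_succ j]; simp only [mul_assoc]
      _ = bσ n (j+1+1) * (bσ n (j+1) * (bσ n (j+1+1) * (U n j * (bσ n (j+1) * U n j)))) := by
          rw [bσ_comm_U' (by omega) (by omega)]
      _ = bσ n (j+1) * (bσ n (j+1+1) * (bσ n (j+1) * (U n j * (bσ n (j+1) * U n j)))) := by
          rw [braid' (by omega) (by omega)]
      _ = bσ n (j+1) * (bσ n (j+1+1) * (bσ n (j+1) * (U n j * U n (j+1)))) := by
          rw [U_succ j]
      _ = bσ n (j+1) * (bσ n (j+1+1) * (U n j * (U n (j+1) * bσ n 1))) := by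
          rw [ih (by omega)]
      _ = bσ n (j+1) * (U n j * (bσ n (j+1+1) * (U n (j+1) * bσ n 1))) := by
          rw [bσ_comm_U' (by omega) (by omega)]
      _ = U n (j+1) * (U n (j+1+1) * bσ n 1) := by
          rw [U_succ (j+1), U_succ j]; simp only [mul_assoc]

lemma L1x {j : ℕ} (hj : j + 1 ≤ n - 1) (x : BraidGroup n) :
    bσ n (j+1) * (U n j * (U n (j+1) * x)) = U n j * (U n (j+1) * (bσ n 1 * x)) := by
  have h := L1 (n := n) (j := j) hj
  simp only [← mul_assoc] at h ⊢
  rw [h]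

lemma L2 (hn : 2 ≤ n) : bσ n (n-1) * (bδ n * bδ n) = bδ n * (bδ n * bσ n 1) := by
  obtain ⟨m, hm⟩ : ∃ m, n - 1 = m + 1 := ⟨n - 2, by omega⟩
  rw [bδ_eq, congrArg (bσ n) hm, congrArg (U n) hm]
  have hL : bσ n (m+1) * (U n (m+1) * U n (m+1)) =
      U n m * (U n (m+1) * (bσ n 1 * bσ n 1)) := by
    nth_rw 1 [U_succ m]
    rw [mul_assoc, L1 (by omega), L1x (by omega)]
  have hR : U n (m+1) * (U n (m+1) * bσ n 1) =
      U n m * (U n (m+1) * (bσ n 1 * bσ n 1)) := by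
    nth_rw 1 [U_succ m]
    rw [mul_assoc, L1x (by omega)]
  exact hL.trans hR.symm

lemma L2x (hn : 2 ≤ n) (x : BraidGroup n) :
    bσ n (n-1) * (bδ n * (bδ n * x)) = bδ n * (bδ n * (bσ n 1 * x)) := by
  have h := L2 (n := n) hn
  simp only [← mul_assoc] at h ⊢
  rw [h]

lemma shift_δ {i : ℕ} (hi : 1 ≤ i) (hin : i + 1 ≤ n - 1) :
    bσ n i * bδ n = bδ n * bσ n (i+1) := by
  rw [bδ_eq]; exact shift_U hi hin le_rfl

lemma shift_δpow {i m : ℕ} (hi : 1 ≤ i) (him : i + m ≤ n - 1) :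
    bσ n i * bδ n ^ m = bδ n ^ m * bσ n (i+m) := by
  induction m with
  | zero => simp
  | succ m ih =>
    rw [pow_succ, ← mul_assoc, ih (by omega), mul_assoc, shift_δ (by omega) (by omega),
      ← mul_assoc, show i + m + 1 = i + (m+1) from rfl]

lemma bσ_comm_δn (hn : 2 ≤ n) {i : ℕ} (hi : 1 ≤ i) (hin : i ≤ n-1) :
    bσ n i * bδ n ^ n = bδ n ^ n * bσ n i := by
  have h1 : bσ n i * bδ n ^ (n-1-i) = bδ n ^ (n-1-i) * bσ n (n-1) := by
    have := shift_δpow (n := n) (i := i) (m := n-1-i) hi (by omega)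
    rwa [show i + (n-1-i) = n-1 by omega] at this
  have h2 : bσ n 1 * bδ n ^ (i-1) = bδ n ^ (i-1) * bσ n i := by
    have := shift_δpow (n := n) (i := 1) (m := i-1) le_rfl (by omega)
    rwa [show 1 + (i-1) = i by omega] at this
  have hsplit : bδ n ^ n = bδ n ^ (n-1-i) * (bδ n * (bδ n * bδ n ^ (i-1))) := by
    rw [show bδ n * (bδ n * bδ n ^ (i-1)) = bδ n ^ (2 + (i-1)) by
      rw [pow_add, pow_two]; simp only [mul_assoc], ← pow_add]
    congr 1
    omega
  rw [hsplit]
  calc bσ n i * (bδ n ^ (n-1-i) * (bδ n * (bδ n * bδ n ^ (i-1))))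
      = (bσ n i * bδ n ^ (n-1-i)) * (bδ n * (bδ n * bδ n ^ (i-1))) := by rw [mul_assoc]
    _ = bδ n ^ (n-1-i) * (bσ n (n-1) * (bδ n * (bδ n * bδ n ^ (i-1)))) := by
        rw [h1]; simp only [mul_assoc]
    _ = bδ n ^ (n-1-i) * (bδ n * (bδ n * (bσ n 1 * bδ n ^ (i-1)))) := by
        rw [L2x hn]
    _ = bδ n ^ (n-1-i) * (bδ n * (bδ n * (bδ n ^ (i-1) * bσ n i))) := by rw [h2]
    _ = bδ n ^ (n-1-i) * (bδ n * (bδ n * bδ n ^ (i-1))) * bσ n i := by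
        simp only [mul_assoc]

lemma δn_central (hn : 2 ≤ n) (g : BraidGroup n) : g * bδ n ^ n = bδ n ^ n * g := by
  have : g ∈ Subgroup.centralizer {bδ n ^ n} := by
    apply PresentedGroup.generated_by
    intro j
    rw [Subgroup.mem_centralizer_iff]
    rintro x ⟨rfl⟩
    have hj : PresentedGroup.of j = bσ n ((j : ℕ) + 1) := by
      rw [bσ_of (by omega) (by omega : (j:ℕ)+1 ≤ n-1)]
      rfl
    rw [hj, bσ_comm_δn hn (by omega) (by omega : (j:ℕ)+1 ≤ n-1)]
  exact (Subgroup.mem_centralizer_iff.mp this (bδ n ^ n) rfl).symm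

lemma eps_pow {m : ℕ} (hm : m ≤ n-1) : bε n ^ m = bδ n ^ m * U n m := by
  induction m with
  | zero => simp [U_zero]
  | succ m ih =>
    rw [pow_succ', ih (by omega), bε, mul_assoc, ← mul_assoc (bσ n 1),
      shift_δpow (i := 1) le_rfl (by omega : 1 + m ≤ n - 1), U_succ,
      show 1 + m = m + 1 by omega, ← mul_assoc, ← mul_assoc, ← pow_succ']
    simp only [mul_assoc]

lemma eps_n1 (hn : 2 ≤ n) : bε n ^ (n-1) = bδ n ^ n := by
  rw [eps_pow le_rfl, ← bδ_eq, ← pow_succ]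
  congr 1
  omega

lemma δ_zpow_comm (hn : 2 ≤ n) (m : ℤ) (g : BraidGroup n) :
    Commute g (bδ n ^ ((n:ℤ) * m)) := by
  have h : Commute g (bδ n ^ (n:ℕ)) := δn_central hn g
  have h2 : bδ n ^ ((n:ℤ) * m) = (bδ n ^ (n:ℕ)) ^ m := by
    rw [zpow_mul, zpow_natCast]
  rw [h2]
  exact h.zpow_right m

lemma eps_z (hn : 2 ≤ n) : bε n ^ ((n:ℤ) - 1) = bδ n ^ (n:ℤ) := by
  have h : ((n - 1 : ℕ) : ℤ) = (n:ℤ) - 1 := by omega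
  rw [← h, zpow_natCast, eps_n1 hn, ← zpow_natCast]

end StableAux

open StableAux in
/-- Let `d = gcd(k, n-1)` and `(n-1)p + kq = d`. If `α^{(n-1)/d} = δ^n` (as holds
for any conjugate of `ε^d`) then `δ^{np} (α^{k/d})^q = α`; if `β^{(n-1)/d} = δ^{kn/d}`
(as holds for any conjugate of `ε^k`) then `(δ^{np} β^q)^{k/d} = β`.  In particular
`f(α) = α^{k/d}` and `g(β) = δ^{np} β^q` are mutually inverse bijections between the
conjugacy classes of `ε^d` and of `ε^k`. -/
theorem stable_correspondence (n : ℕ) (hn : 2 ≤ n) (k d p q : ℤ)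
    (hd : d = Int.gcd k ((n : ℤ) - 1)) (hpq : ((n : ℤ) - 1) * p + k * q = d) :
    (∀ α : BraidGroup n, α ^ (((n : ℤ) - 1) / d) = bδ n ^ (n : ℤ) →
        bδ n ^ ((n : ℤ) * p) * (α ^ (k / d)) ^ q = α) ∧
    (∀ β : BraidGroup n, β ^ (((n : ℤ) - 1) / d) = bδ n ^ (k * (n : ℤ) / d) →
        (bδ n ^ ((n : ℤ) * p) * β ^ q) ^ (k / d) = β) ∧
    (∀ α : BraidGroup n, IsConj (bε n ^ d) α →
        IsConj (bε n ^ k) (α ^ (k / d)) ∧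
          bδ n ^ ((n : ℤ) * p) * (α ^ (k / d)) ^ q = α) ∧
    (∀ β : BraidGroup n, IsConj (bε n ^ k) β →
        IsConj (bε n ^ d) (bδ n ^ ((n : ℤ) * p) * β ^ q) ∧
          (bδ n ^ ((n : ℤ) * p) * β ^ q) ^ (k / d) = β) := by
  have hd1 : d ∣ (n:ℤ) - 1 := hd ▸ Int.gcd_dvd_right k ((n:ℤ) - 1)
  have hdk : d ∣ k := hd ▸ Int.gcd_dvd_left k ((n:ℤ) - 1)
  have hd0 : d ≠ 0 := by
    intro h
    rw [h, zero_dvd_iff] at hd1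
    omega
  set e := ((n:ℤ) - 1) / d with hedef
  set K := k / d with hKdef
  have he : d * e = (n:ℤ) - 1 := Int.mul_ediv_cancel' hd1
  have hK : d * K = k := Int.mul_ediv_cancel' hdk
  have h1 : e * p + K * q = 1 := by
    have h2 : d * (e * p + K * q) = d * 1 := by
      calc d * (e * p + K * q) = (d * e) * p + (d * K) * q := by ring
        _ = ((n:ℤ) - 1) * p + k * q := by rw [he, hK]
        _ = d := hpq
        _ = d * 1 := (mul_one d).symm
    exact mul_left_cancel₀ hd0 h2
  have hkn : k * (n:ℤ) / d = K * (n:ℤ) := by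
    rw [← hK, mul_assoc, Int.mul_ediv_cancel_left _ hd0]
  have core1 : ∀ α : BraidGroup n, α ^ e = bδ n ^ (n:ℤ) →
      bδ n ^ ((n:ℤ) * p) * (α ^ K) ^ q = α := by
    intro α hα
    calc bδ n ^ ((n:ℤ) * p) * (α ^ K) ^ q
        = (bδ n ^ (n:ℤ)) ^ p * α ^ (K * q) := by rw [← zpow_mul α, zpow_mul]
      _ = α ^ (e * p) * α ^ (K * q) := by rw [← hα, ← zpow_mul]
      _ = α ^ (e * p + K * q) := (zpow_add α _ _).symm
      _ = α := by rw [h1, zpow_one]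
  have core2 : ∀ β : BraidGroup n, β ^ e = bδ n ^ (k * (n:ℤ) / d) →
      (bδ n ^ ((n:ℤ) * p) * β ^ q) ^ K = β := by
    intro β hβ
    rw [hkn] at hβ
    have hc : Commute (bδ n ^ ((n:ℤ) * p)) (β ^ q) := (δ_zpow_comm hn p (β ^ q)).symm
    calc (bδ n ^ ((n:ℤ) * p) * β ^ q) ^ K
        = (bδ n ^ ((n:ℤ) * p)) ^ K * (β ^ q) ^ K := hc.mul_zpow K
      _ = bδ n ^ ((n:ℤ) * p * K) * β ^ (q * K) := by rw [← zpow_mul, ← zpow_mul]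
      _ = (bδ n ^ (K * (n:ℤ))) ^ p * β ^ (K * q) := by
          rw [← zpow_mul, show K * (n:ℤ) * p = (n:ℤ) * p * K from by ring,
            show q * K = K * q from by ring]
      _ = β ^ (e * p) * β ^ (K * q) := by rw [← hβ, ← zpow_mul]
      _ = β ^ (e * p + K * q) := (zpow_add β _ _).symm
      _ = β := by rw [h1, zpow_one]
  have hcent : ∀ (m : ℤ) (g : BraidGroup n),
      g * bδ n ^ ((n:ℤ) * m) = bδ n ^ ((n:ℤ) * m) * g := fun m g => δ_zpow_comm hn m g
  have hδn_conj : ∀ c : BraidGroup n, c * bδ n ^ (n:ℤ) * c⁻¹ = bδ n ^ (n:ℤ) := by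
    intro c
    have h := hcent 1 c
    rw [mul_one] at h
    rw [h, mul_inv_cancel_right]
  refine ⟨core1, core2, ?_, ?_⟩
  · intro α h
    obtain ⟨c, hc⟩ := isConj_iff.1 h
    have hconj : ∀ m : ℤ, α ^ m = c * bε n ^ (d * m) * c⁻¹ := by
      intro m
      rw [← hc, conj_zpow, ← zpow_mul]
    have hαe : α ^ e = bδ n ^ (n:ℤ) := by
      rw [hconj e, he, eps_z hn, hδn_conj]
    refine ⟨?_, core1 α hαe⟩
    exact isConj_iff.2 ⟨c, by rw [hconj K, hK]⟩
  · intro β h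
    obtain ⟨c, hc⟩ := isConj_iff.1 h
    have hconj : ∀ m : ℤ, β ^ m = c * bε n ^ (k * m) * c⁻¹ := by
      intro m
      rw [← hc, conj_zpow, ← zpow_mul]
    have hβe : β ^ e = bδ n ^ (k * (n:ℤ) / d) := by
      rw [hconj e, show k * e = ((n:ℤ) - 1) * K from by rw [← hK, ← he]; ring,
        zpow_mul, eps_z hn, ← zpow_mul, show (n:ℤ) * K = K * (n:ℤ) from mul_comm _ _,
        ← hkn]
      have h2 : c * bδ n ^ (k * (n:ℤ) / d) * c⁻¹ = bδ n ^ (k * (n:ℤ) / d) := by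
        rw [hkn, show K * (n:ℤ) = (n:ℤ) * K from mul_comm _ _]
        have h3 := hcent K c
        rw [h3, mul_inv_cancel_right]
      exact h2
    refine ⟨?_, core2 β hβe⟩
    apply isConj_iff.2 ⟨c, ?_⟩
    have hβq : β ^ q = c * bε n ^ (k * q) * c⁻¹ := hconj q
    have hδp : bδ n ^ ((n:ℤ) * p) = bε n ^ (((n:ℤ) - 1) * p) := by
      rw [zpow_mul, zpow_mul, eps_z hn]
    calc c * bε n ^ d * c⁻¹
        = c * (bε n ^ (((n:ℤ) - 1) * p) * bε n ^ (k * q)) * c⁻¹ := by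
          rw [← zpow_add, ← hpq]
      _ = bε n ^ (((n:ℤ) - 1) * p) * (c * bε n ^ (k * q) * c⁻¹) := by
          have h4 : c * bε n ^ (((n:ℤ) - 1) * p) = bε n ^ (((n:ℤ) - 1) * p) * c := by
            rw [← hδp] at *
            have := hcent p c
            rw [← hδp]
            exact this
          simp only [← mul_assoc]
          rw [h4]
      _ = bδ n ^ ((n:ℤ) * p) * β ^ q := by rw [← hδp, ← hβq]
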